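/- For the embedding ι₃: SL(2,ℝ) → Sp(2,ℝ), ι₃(M) = (M 0; 0 (Mᵀ)⁻¹), one has w(ι₃(M), ι₃(N)) = 0 for all M, N ∈ SL(2,ℝ). Consequently, for any multiplier system v of weight r on a group containing the image of ι₃, the map M ↦ v(ι₃(M)) is a group homomorphism. -/

import Mathlib

open Matrix Complex

noncomputable section

/-- The space of `2g × 2g` real matrices (symplectic candidates). -/
abbrev SpMat (g : ℕ) := Matrix (Fin g ⊕ Fin g) (Fin g ⊕ Fin g) ℝ

/-- The Siegel upper half plane of genus `g`: symmetric complex matrices with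
positive definite imaginary part. -/
def SiegelUHP (g : ℕ) : Set (Matrix (Fin g) (Fin g) ℂ) :=
  {Z | Z.IsSymm ∧ Matrix.PosDef (Matrix.of fun i j => (Z i j).im)}

/-- Coercion of a real matrix to a complex matrix. -/
def cmat {g : ℕ} (A : Matrix (Fin g) (Fin g) ℝ) : Matrix (Fin g) (Fin g) ℂ :=
  A.map (fun x => (x : ℂ))

/-- The automorphy factor `J(M,Z) = det (C Z + D)`. -/
def Jfac {g : ℕ} (M : SpMat g) (Z : Matrix (Fin g) (Fin g) ℂ) : ℂ :=
  (cmat M.toBlocks₂₁ * Z + cmat M.toBlocks₂₂).det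

/-- The action `M⟨Z⟩ = (A Z + B)(C Z + D)⁻¹` on the Siegel upper half plane. -/
def spAct {g : ℕ} (M : SpMat g) (Z : Matrix (Fin g) (Fin g) ℂ) :
    Matrix (Fin g) (Fin g) ℂ :=
  (cmat M.toBlocks₁₁ * Z + cmat M.toBlocks₁₂) *
    (cmat M.toBlocks₂₁ * Z + cmat M.toBlocks₂₂)⁻¹

/-- The base point `i·E` of the Siegel upper half plane. -/
def iE (g : ℕ) : Matrix (Fin g) (Fin g) ℂ := Complex.I • 1

/-- `L` is a continuous branch of `arg J(M, ·)` on the Siegel upper half plane,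
normalized to the principal value at `Z = iE`. -/
def IsArgBranch (g : ℕ) (L : SpMat g → Matrix (Fin g) (Fin g) ℂ → ℝ) : Prop :=
  (∀ M ∈ Matrix.symplecticGroup (Fin g) ℝ, ContinuousOn (L M) (SiegelUHP g)) ∧
  (∀ M ∈ Matrix.symplecticGroup (Fin g) ℝ, ∀ Z ∈ SiegelUHP g,
      (‖Jfac M Z‖ : ℂ) * Complex.exp (Complex.I * (L M Z)) = Jfac M Z) ∧
  (∀ M ∈ Matrix.symplecticGroup (Fin g) ℝ, L M (iE g) = Complex.arg (Jfac M (iE g)))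

/-- The cocycle `w(M,N) = (1/2π)(L(MN,Z) - L(M,NZ) - L(N,Z))`, evaluated at the
base point `Z = iE` (it is independent of `Z`). -/
def wcoc {g : ℕ} (L : SpMat g → Matrix (Fin g) (Fin g) ℂ → ℝ) (M N : SpMat g) : ℝ :=
  (L (M * N) (iE g) - L M (spAct N (iE g)) - L N (iE g)) / (2 * Real.pi)

/-- A multiplier system of weight `r` on `Γ`: values of absolute value `1`
satisfying `v(MN) = v(M)v(N)·e^{2πi r w(M,N)}`. -/
def IsMultiplier (g : ℕ) (L : SpMat g → Matrix (Fin g) (Fin g) ℂ → ℝ)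
    (Γ : Set (SpMat g)) (r : ℝ) (v : SpMat g → ℂ) : Prop :=
  (∀ M ∈ Γ, ‖v M‖ = 1) ∧
  (∀ M ∈ Γ, ∀ N ∈ Γ, v (M * N) =
      v M * v N * Complex.exp (2 * Real.pi * Complex.I * r * wcoc L M N))

/-- The embedding `ι₃ : SL(2,ℝ) → Sp(2,ℝ)`, `M ↦ (M 0; 0 (Mᵀ)⁻¹)`. -/
def iota3' (A : Matrix (Fin 2) (Fin 2) ℝ) : SpMat 2 :=
  Matrix.fromBlocks A 0 0 (Aᵀ)⁻¹

/-! ### Auxiliary lemmas -/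

lemma cmat_mul {g : ℕ} (A B : Matrix (Fin g) (Fin g) ℝ) : cmat (A * B) = cmat A * cmat B := by
  ext i j; simp [cmat, Matrix.mul_apply]

lemma cmat_one {g : ℕ} : cmat (1 : Matrix (Fin g) (Fin g) ℝ) = 1 := by
  ext i j; simp [cmat, Matrix.one_apply, apply_ite]

lemma cmat_zero {g : ℕ} : cmat (0 : Matrix (Fin g) (Fin g) ℝ) = 0 := by
  ext i j; simp [cmat]

lemma cmat_transpose {g : ℕ} (A : Matrix (Fin g) (Fin g) ℝ) : cmat Aᵀ = (cmat A)ᵀ := by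
  ext i j; simp [cmat]

lemma posDef_smul' {g : ℕ} {P : Matrix (Fin g) (Fin g) ℝ} (hP : P.PosDef) {a : ℝ} (ha : 0 < a) :
    (a • P).PosDef := by
  refine Matrix.posDef_iff_dotProduct_mulVec.mpr ⟨?_, fun x hx => ?_⟩
  · have := hP.1.eq
    unfold Matrix.IsHermitian at *
    rw [Matrix.conjTranspose_smul, this, star_trivial]
  · rw [Matrix.smul_mulVec, dotProduct_smul, smul_eq_mul]
    exact mul_pos ha (hP.dotProduct_mulVec_pos hx)

lemma siegel_convex (g : ℕ) : Convex ℝ (SiegelUHP g) := by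
  intro x hx y hy a b ha hb hab
  rcases ha.eq_or_lt with h0 | ha'
  · rw [← h0] at hab ⊢
    rw [zero_add] at hab
    simp [hab, hy]
  rcases hb.eq_or_lt with h1 | hb'
  · rw [← h1] at hab ⊢
    rw [add_zero] at hab
    simp [hab, hx]
  refine ⟨?_, ?_⟩
  · have hxs := hx.1; have hys := hy.1
    unfold Matrix.IsSymm at *
    rw [Matrix.transpose_add, Matrix.transpose_smul, Matrix.transpose_smul, hxs, hys]
  · have heq : (Matrix.of fun i j => ((a • x + b • y) i j).im) =
        a • (Matrix.of fun i j => ((x i j).im)) + b • (Matrix.of fun i j => ((y i j).im)) := by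
      ext i j
      simp [Matrix.add_apply, Matrix.smul_apply, Complex.add_im, Complex.smul_im, smul_eq_mul]
    rw [heq]
    exact (posDef_smul' hx.2 ha').add (posDef_smul' hy.2 hb')

lemma I_smul_mem {g : ℕ} {S : Matrix (Fin g) (Fin g) ℝ} (hs : S.IsSymm) (hp : S.PosDef) :
    (Complex.I • cmat S) ∈ SiegelUHP g := by
  constructor
  · unfold Matrix.IsSymm at *
    rw [Matrix.transpose_smul, ← cmat_transpose, hs]
  · have heq : (Matrix.of fun i j => ((Complex.I • cmat S) i j).im) = S := by
      ext i j
      simp [cmat, Matrix.smul_apply, Complex.mul_im]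
    rw [heq]; exact hp

lemma iE_mem (g : ℕ) : iE g ∈ SiegelUHP g := by
  have h : iE g = Complex.I • cmat 1 := by rw [cmat_one]; rfl
  rw [h]
  exact I_smul_mem (Matrix.isSymm_one) Matrix.PosDef.one

lemma Jfac_iota3 {M : Matrix (Fin 2) (Fin 2) ℝ} (hM : M.det = 1)
    (Z : Matrix (Fin 2) (Fin 2) ℂ) : Jfac (iota3' M) Z = 1 := by
  unfold Jfac iota3'
  rw [Matrix.toBlocks_fromBlocks₂₁, Matrix.toBlocks_fromBlocks₂₂, cmat_zero, Matrix.zero_mul,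
    zero_add]
  have h1 : (cmat (Mᵀ)⁻¹).det = (((Mᵀ)⁻¹.det : ℝ) : ℂ) := (RingHom.map_det Complex.ofRealHom _).symm
  rw [h1, Matrix.det_nonsing_inv, Matrix.det_transpose, hM, Ring.inverse_one]
  norm_num

lemma iota3'_mem {M : Matrix (Fin 2) (Fin 2) ℝ} (hM : M.det = 1) :
    iota3' M ∈ Matrix.symplecticGroup (Fin 2) ℝ := by
  have hU : IsUnit M.det := by rw [hM]; exact isUnit_one
  have hUt : IsUnit Mᵀ.det := by rw [Matrix.det_transpose, hM]; exact isUnit_one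
  rw [SymplecticGroup.mem_iff]
  unfold iota3' Matrix.J
  rw [Matrix.fromBlocks_transpose, Matrix.fromBlocks_multiply, Matrix.fromBlocks_multiply]
  simp [Matrix.transpose_nonsing_inv, Matrix.mul_nonsing_inv _ hU, Matrix.nonsing_inv_mul _ hUt]

lemma iota3'_mul (M N : Matrix (Fin 2) (Fin 2) ℝ) :
    iota3' M * iota3' N = iota3' (M * N) := by
  unfold iota3'
  rw [Matrix.fromBlocks_multiply]
  simp [Matrix.transpose_mul, Matrix.mul_inv_rev]

lemma spAct_iota3 {N : Matrix (Fin 2) (Fin 2) ℝ} (hN : N.det = 1) :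
    spAct (iota3' N) (iE 2) = Complex.I • cmat (N * Nᵀ) := by
  have hUt : IsUnit Nᵀ.det := by rw [Matrix.det_transpose, hN]; exact isUnit_one
  have hinv : (cmat (Nᵀ)⁻¹)⁻¹ = cmat Nᵀ := by
    apply Matrix.inv_eq_left_inv
    rw [← cmat_mul, Matrix.mul_nonsing_inv _ hUt, cmat_one]
  unfold spAct iota3' iE
  rw [Matrix.toBlocks_fromBlocks₁₁, Matrix.toBlocks_fromBlocks₁₂, Matrix.toBlocks_fromBlocks₂₁,
    Matrix.toBlocks_fromBlocks₂₂, cmat_zero, Matrix.zero_mul, zero_add, add_zero, hinv,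
    Matrix.mul_smul, mul_one, Matrix.smul_mul, cmat_mul]

lemma posDef_mul_transpose {N : Matrix (Fin 2) (Fin 2) ℝ} (hN : N.det = 1) :
    (N * Nᵀ).PosDef := by
  have hUt : IsUnit (Nᵀ) := by
    rw [Matrix.isUnit_iff_isUnit_det, Matrix.det_transpose, hN]; exact isUnit_one
  refine Matrix.posDef_iff_dotProduct_mulVec.mpr ⟨?_, fun x hx => ?_⟩
  · unfold Matrix.IsHermitian
    ext i j
    simp [Matrix.conjTranspose_apply, Matrix.mul_apply, Matrix.transpose_apply, mul_comm]
  · have hv : (Nᵀ *ᵥ x) ≠ 0 := by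
      intro h
      have hinj := Matrix.mulVec_injective_iff_isUnit.mpr hUt
      have : x = 0 := by
        apply hinj
        rw [h, Matrix.mulVec_zero]
      exact hx this
    have heq : star x ⬝ᵥ ((N * Nᵀ) *ᵥ x) = star (Nᵀ *ᵥ x) ⬝ᵥ (Nᵀ *ᵥ x) := by
      rw [← Matrix.mulVec_mulVec, star_trivial, star_trivial, Matrix.dotProduct_mulVec,
        ← Matrix.mulVec_transpose]
    rw [heq]
    exact Matrix.dotProduct_star_self_pos_iff.mpr hv

lemma L_zero (L : SpMat 2 → Matrix (Fin 2) (Fin 2) ℂ → ℝ) (hL : IsArgBranch 2 L)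
    {M : SpMat 2} (hM : M ∈ Matrix.symplecticGroup (Fin 2) ℝ)
    (hJ : ∀ Z, Jfac M Z = 1) {Z : Matrix (Fin 2) (Fin 2) ℂ} (hZ : Z ∈ SiegelUHP 2) :
    L M Z = 0 := by
  have hmem0 : iE 2 ∈ SiegelUHP 2 := iE_mem 2
  have hval : ∀ W ∈ SiegelUHP 2, ∃ n : ℤ, L M W = n * (2 * Real.pi) := by
    intro W hW
    have h := hL.2.1 M hM W hW
    rw [hJ W, norm_one, Complex.ofReal_one, one_mul] at h
    rw [Complex.exp_eq_one_iff] at h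
    obtain ⟨n, hn⟩ := h
    refine ⟨n, ?_⟩
    have h2 : Complex.I * (L M W : ℂ) = Complex.I * (((n : ℝ) * (2 * Real.pi) : ℝ) : ℂ) := by
      rw [hn]; push_cast; ring
    have h3 := mul_left_cancel₀ Complex.I_ne_zero h2
    exact_mod_cast h3
  have hbase : L M (iE 2) = 0 := by
    rw [hL.2.2 M hM, hJ, Complex.arg_one]
  obtain ⟨n, hn⟩ := hval Z hZ
  have hconn : IsPreconnected (SiegelUHP 2) := (siegel_convex 2).isPreconnected
  rcases lt_trichotomy n 0 with h | h | h
  · -- n ≤ -1 : -π lies strictly between L M Z and 0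
    exfalso
    have hn' : n ≤ -1 := by omega
    have hn1 : (n : ℝ) ≤ -1 := by exact_mod_cast hn'
    have hπ : -Real.pi ∈ Set.Icc (L M Z) (L M (iE 2)) := by
      rw [hbase, hn]
      constructor
      · nlinarith [Real.pi_pos]
      · nlinarith [Real.pi_pos]
    obtain ⟨W, hW, hWval⟩ := hconn.intermediate_value hZ hmem0 (hL.1 M hM) hπ
    obtain ⟨m, hm⟩ := hval W hW
    rw [hWval] at hm
    have h1 : (-1 : ℝ) * Real.pi = (2 * m) * Real.pi := by linear_combination hm
    have h2 : (-1 : ℝ) = 2 * m := mul_right_cancel₀ Real.pi_ne_zero h1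
    have h3 : (-1 : ℤ) = 2 * m := by exact_mod_cast h2
    omega
  · rw [hn, h]; simp
  · exfalso
    have hn1 : (1 : ℝ) ≤ (n : ℝ) := by exact_mod_cast h
    have hπ : Real.pi ∈ Set.Icc (L M (iE 2)) (L M Z) := by
      rw [hbase, hn]
      constructor
      · exact Real.pi_pos.le
      · nlinarith [Real.pi_pos]
    obtain ⟨W, hW, hWval⟩ := hconn.intermediate_value hmem0 hZ (hL.1 M hM) hπ
    obtain ⟨m, hm⟩ := hval W hW
    rw [hWval] at hm
    have h1 : (1 : ℝ) * Real.pi = (2 * m) * Real.pi := by linear_combination hm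
    have h2 : (1 : ℝ) = 2 * m := mul_right_cancel₀ Real.pi_ne_zero h1
    have h3 : (1 : ℤ) = 2 * m := by exact_mod_cast h2
    omega

/-- `w(ι₃(M), ι₃(N)) = 0` for all `M, N ∈ SL(2,ℝ)`; consequently, for any
multiplier system `v` of weight `r` on a group containing the image of `ι₃`,
the map `M ↦ v(ι₃(M))` is a group homomorphism. -/
theorem w_iota3_vanishes
    (L : SpMat 2 → Matrix (Fin 2) (Fin 2) ℂ → ℝ) (hL : IsArgBranch 2 L) :
    (∀ M N : Matrix (Fin 2) (Fin 2) ℝ, M.det = 1 → N.det = 1 →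
      wcoc L (iota3' M) (iota3' N) = 0) ∧
    (∀ (Γ : Set (SpMat 2)) (r : ℝ) (v : SpMat 2 → ℂ),
      IsMultiplier 2 L Γ r v →
      (∀ K : Matrix (Fin 2) (Fin 2) ℝ, K.det = 1 → iota3' K ∈ Γ) →
      ∀ M N : Matrix (Fin 2) (Fin 2) ℝ, M.det = 1 → N.det = 1 →
        v (iota3' (M * N)) = v (iota3' M) * v (iota3' N)) := by
  have key : ∀ M N : Matrix (Fin 2) (Fin 2) ℝ, M.det = 1 → N.det = 1 →
      wcoc L (iota3' M) (iota3' N) = 0 := by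
    intro M N hM hN
    have hMN : (M * N).det = 1 := by rw [Matrix.det_mul, hM, hN, one_mul]
    have hNNt : (Matrix.of fun i j => ((N * Nᵀ) i j) : Matrix (Fin 2) (Fin 2) ℝ).IsSymm := by
      unfold Matrix.IsSymm
      exact (posDef_mul_transpose hN).1
    have hsymm : (N * Nᵀ).IsSymm := (posDef_mul_transpose hN).1
    have hspmem : spAct (iota3' N) (iE 2) ∈ SiegelUHP 2 := by
      rw [spAct_iota3 hN]
      exact I_smul_mem hsymm (posDef_mul_transpose hN)
    unfold wcoc
    rw [iota3'_mul,
      L_zero L hL (iota3'_mem hMN) (Jfac_iota3 hMN) (iE_mem 2),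
      L_zero L hL (iota3'_mem hM) (Jfac_iota3 hM) hspmem,
      L_zero L hL (iota3'_mem hN) (Jfac_iota3 hN) (iE_mem 2)]
    simp
  refine ⟨key, ?_⟩
  intro Γ r v hv hΓ M N hM hN
  have h2 := hv.2 (iota3' M) (hΓ M hM) (iota3' N) (hΓ N hN)
  rw [key M N hM hN] at h2
  rw [iota3'_mul] at h2
  simpa using h2
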